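/- arXiv:quant-ph/0302174 — 6 statements merged into one kernel-verified Lean document; each statement's English description precedes it below -/
import Mathlib

section
/- Let (A_j)_{j∈J} be Kraus operators of a memoryless quantum channel. If a quantum source (ρ_m)_{m≥1} is stationary and ergodic, then the transformed family (E^{⊗m}(ρ_m))_{m≥1} is ergodic. -/
open Matrix Finset Filter Topology
open scoped ComplexOrder

noncomputable section

/-- `Mat d m` is the algebra of operators on the `m`-fold tensor power of `ℂ^d`,
realized as matrices indexed by words `Fin m → Fin d`. -/
abbrev Mat (d m : ℕ) : Type := Matrix (Fin m → Fin d) (Fin m → Fin d) ℂ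

/-- Kronecker (tensor) product `A ⊗ B` of `A : Mat d m` and `B : Mat d i`. -/
def tens {d m i : ℕ} (A : Mat d m) (B : Mat d i) : Mat d (m + i) :=
  Matrix.of fun x y =>
    A (fun k => x (Fin.castAdd i k)) (fun k => y (Fin.castAdd i k)) *
    B (fun k => x (Fin.natAdd m k)) (fun k => y (Fin.natAdd m k))

/-- A quantum source: each `ρ m` (for `m ≥ 1`) is positive semidefinite with trace 1. -/
def IsQSource (d : ℕ) (ρ : ∀ m, Mat d m) : Prop :=
  ∀ m, 1 ≤ m → (ρ m).PosSemidef ∧ (ρ m).trace = 1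

/-- Consistency: `tr(ρ_m a) = tr(ρ_{m+i} (a ⊗ I^{⊗i}))`. -/
def QConsistent (d : ℕ) (ρ : ∀ m, Mat d m) : Prop :=
  ∀ m i, 1 ≤ m → 1 ≤ i → ∀ a : Mat d m,
    (ρ m * a).trace = (ρ (m + i) * tens a (1 : Mat d i)).trace

/-- Stationarity: `tr(ρ_m a) = tr(ρ_{i+m} (I^{⊗i} ⊗ a))`. -/
def QStationary (d : ℕ) (ρ : ∀ m, Mat d m) : Prop :=
  ∀ m i, 1 ≤ m → 1 ≤ i → ∀ a : Mat d m,
    (ρ m * a).trace = (ρ (i + m) * tens (1 : Mat d i) a).trace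

/-- Ergodicity: Cesàro averages of `tr(ρ_{m+i} (a ⊗ I^{⊗(i-m)} ⊗ b))` converge to
`tr(ρ_m a)·tr(ρ_m b)`. -/
def QErgodic (d : ℕ) (ρ : ∀ m, Mat d m) : Prop :=
  ∀ m, 1 ≤ m → ∀ a b : Mat d m,
    Tendsto (fun n : ℕ =>
        (n : ℂ)⁻¹ * ∑ i ∈ Finset.Icc m n,
          (ρ (m + (i - m) + m) * tens (tens a (1 : Mat d (i - m))) b).trace)
      atTop (nhds ((ρ m * a).trace * (ρ m * b).trace))

/-- Weak mixing. -/
def QWeakMixing (d : ℕ) (ρ : ∀ m, Mat d m) : Prop :=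
  ∀ m, 1 ≤ m → ∀ a b : Mat d m,
    Tendsto (fun n : ℕ =>
        (n : ℝ)⁻¹ * ∑ i ∈ Finset.Icc m n,
          ‖(ρ (m + (i - m) + m) * tens (tens a (1 : Mat d (i - m))) b).trace
            - (ρ m * a).trace * (ρ m * b).trace‖)
      atTop (nhds 0)

/-- Strong mixing. -/
def QStrongMixing (d : ℕ) (ρ : ∀ m, Mat d m) : Prop :=
  ∀ m, 1 ≤ m → ∀ a b : Mat d m,
    Tendsto (fun i : ℕ =>
        (ρ (m + (i - m) + m) * tens (tens a (1 : Mat d (i - m))) b).trace)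
      atTop (nhds ((ρ m * a).trace * (ρ m * b).trace))

/-- The `m`-fold elementary tensor `A_{j 1} ⊗ ⋯ ⊗ A_{j m}` of Kraus operators. -/
def krausPow {d : ℕ} {J : Type} [Fintype J] (A : J → Matrix (Fin d) (Fin d) ℂ)
    {m : ℕ} (j : Fin m → J) : Mat d m :=
  Matrix.of fun x y => ∏ k, A (j k) (x k) (y k)

/-- The induced map `E^{⊗m}` of a memoryless channel with Kraus operators `A`. -/
def channelPow {d : ℕ} {J : Type} [Fintype J] (A : J → Matrix (Fin d) (Fin d) ℂ)
    (m : ℕ) (σ : Mat d m) : Mat d m :=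
  ∑ j : Fin m → J, krausPow A j * σ * (krausPow A j)ᴴ

/-- A classical source on alphabet `Fin d`: each `p m` (for `m ≥ 1`) is a
probability distribution on words of length `m`. -/
def IsCSource (d : ℕ) (p : ∀ m, (Fin m → Fin d) → ℝ) : Prop :=
  ∀ m, 1 ≤ m → (∀ x, 0 ≤ p m x) ∧ ∑ x, p m x = 1

def CConsistent (d : ℕ) (p : ∀ m, (Fin m → Fin d) → ℝ) : Prop :=
  ∀ m i, 1 ≤ m → 1 ≤ i → ∀ x : Fin m → Fin d,
    p m x = ∑ y : Fin i → Fin d, p (m + i) (Fin.append x y)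

def CStationary (d : ℕ) (p : ∀ m, (Fin m → Fin d) → ℝ) : Prop :=
  ∀ m i, 1 ≤ m → 1 ≤ i → ∀ x : Fin m → Fin d,
    p m x = ∑ y : Fin i → Fin d, p (i + m) (Fin.append y x)

def CErgodic (d : ℕ) (p : ∀ m, (Fin m → Fin d) → ℝ) : Prop :=
  ∀ m, 1 ≤ m → ∀ x y : Fin m → Fin d,
    Tendsto (fun n : ℕ =>
        (n : ℝ)⁻¹ * ∑ i ∈ Finset.Icc m n,
          ∑ z : Fin (i - m) → Fin d, p (m + (i - m) + m) (Fin.append (Fin.append x z) y))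
      atTop (nhds (p m x * p m y))

def CWeakMixing (d : ℕ) (p : ∀ m, (Fin m → Fin d) → ℝ) : Prop :=
  ∀ m, 1 ≤ m → ∀ x y : Fin m → Fin d,
    Tendsto (fun n : ℕ =>
        (n : ℝ)⁻¹ * ∑ i ∈ Finset.Icc m n,
          |(∑ z : Fin (i - m) → Fin d, p (m + (i - m) + m) (Fin.append (Fin.append x z) y))
            - p m x * p m y|)
      atTop (nhds 0)

def CStrongMixing (d : ℕ) (p : ∀ m, (Fin m → Fin d) → ℝ) : Prop :=
  ∀ m, 1 ≤ m → ∀ x y : Fin m → Fin d,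
    Tendsto (fun i : ℕ =>
        ∑ z : Fin (i - m) → Fin d, p (m + (i - m) + m) (Fin.append (Fin.append x z) y))
      atTop (nhds (p m x * p m y))

/-- The classically correlated state `∑_x p(x) · ψ_{x 1}ψ_{x 1}† ⊗ ⋯ ⊗ ψ_{x m}ψ_{x m}†`. -/
def clsState {d : ℕ} (ψ : Fin d → Fin d → ℂ) {m : ℕ} (pm : (Fin m → Fin d) → ℝ) : Mat d m :=
  ∑ x : Fin m → Fin d, (pm x : ℂ) •
    Matrix.of (fun u v => ∏ k, ψ (x k) (u k) * star (ψ (x k) (v k)))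

/-- The probability `⟨u_{x 1} ⊗ ⋯ ⊗ u_{x m}, ρ (u_{x 1} ⊗ ⋯ ⊗ u_{x m})⟩` of
measurement outcome `x` in the product basis built from `u`. -/
def measProb {d m : ℕ} (ρ : Mat d m) (u : Fin d → Fin d → ℂ) (x : Fin m → Fin d) : ℝ :=
  (∑ v : Fin m → Fin d, ∑ w : Fin m → Fin d,
    star (∏ k, u (x k) (v k)) * ρ v w * ∏ k, u (x k) (w k)).re

/-- Von Neumann entropy (base-2) of a Hermitian matrix, via its eigenvalues;
junk value `0` for non-Hermitian input.  The convention `0·log₂ 0 = 0` holds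
automatically since `Real.logb 2 0 = 0`. -/
def vnEntropy {n : Type} [Fintype n] [DecidableEq n] (ρ : Matrix n n ℂ) : ℝ :=
  if h : ρ.IsHermitian then -∑ k, h.eigenvalues k * Real.logb 2 (h.eigenvalues k) else 0


/-- Auxiliary: functions out of `Fin (m+i)` are pairs of functions. -/
def splitFun {α : Type*} {m i : ℕ} :
    ((Fin m → α) × (Fin i → α)) ≃ (Fin (m + i) → α) where
  toFun p := Fin.append p.1 p.2
  invFun f := (fun k => f (Fin.castAdd i k), fun k => f (Fin.natAdd m k))
  left_inv p := by
    refine Prod.ext ?_ ?_ <;> funext k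
    · exact Fin.append_left _ _ k
    · exact Fin.append_right _ _ k
  right_inv f := by
    funext k
    refine Fin.addCases (fun k => ?_) (fun k => ?_) k
    · exact Fin.append_left _ _ k
    · exact Fin.append_right _ _ k

lemma tens_mul {d m i : ℕ} (A C : Mat d m) (B D : Mat d i) :
    tens A B * tens C D = tens (A * C) (B * D) := by
  ext x y
  simp only [tens, Matrix.mul_apply, Matrix.of_apply]
  rw [← Equiv.sum_comp (splitFun (α := Fin d) (m := m) (i := i)), Fintype.sum_prod_type]
  simp only [splitFun, Equiv.coe_fn_mk, Fin.append_left, Fin.append_right]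
  rw [Finset.sum_mul_sum]
  refine Finset.sum_congr rfl fun z1 _ => Finset.sum_congr rfl fun z2 _ => ?_
  ring

lemma tens_conjTranspose {d m i : ℕ} (A : Mat d m) (B : Mat d i) :
    (tens A B)ᴴ = tens Aᴴ Bᴴ := by
  ext x y
  simp [tens, Matrix.conjTranspose_apply, mul_comm]

lemma tens_one (d m i : ℕ) : tens (1 : Mat d m) (1 : Mat d i) = (1 : Mat d (m + i)) := by
  ext x y
  simp only [tens, Matrix.of_apply, Matrix.one_apply]
  by_cases h : x = y
  · simp [h]
  · rw [if_neg h]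
    have : ¬((fun k => x (Fin.castAdd i k)) = (fun k => y (Fin.castAdd i k)) ∧
        (fun k => x (Fin.natAdd m k)) = (fun k => y (Fin.natAdd m k))) := by
      rintro ⟨h1, h2⟩
      apply h
      funext k
      exact Fin.addCases (fun k => congrFun h1 k) (fun k => congrFun h2 k) k
    rcases not_and_or.mp this with h' | h' <;> simp [h']

lemma krausPow_split {d : ℕ} {J : Type} [Fintype J] (A : J → Matrix (Fin d) (Fin d) ℂ)
    {m i : ℕ} (j : Fin (m + i) → J) :
    krausPow A j = tens (krausPow A (fun k => j (Fin.castAdd i k)))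
      (krausPow A (fun k => j (Fin.natAdd m k))) := by
  ext x y
  simp [krausPow, tens, Fin.prod_univ_add]

/-- The adjoint (Heisenberg picture) of the channel. -/
def adjPow {d : ℕ} {J : Type} [Fintype J] (A : J → Matrix (Fin d) (Fin d) ℂ)
    (m : ℕ) (X : Mat d m) : Mat d m :=
  ∑ j : Fin m → J, (krausPow A j)ᴴ * X * krausPow A j

lemma trace_channelPow_mul {d : ℕ} {J : Type} [Fintype J]
    (A : J → Matrix (Fin d) (Fin d) ℂ) (m : ℕ) (σ X : Mat d m) :
    (channelPow A m σ * X).trace = (σ * adjPow A m X).trace := by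
  simp only [channelPow, adjPow, Finset.sum_mul, Finset.mul_sum, Matrix.trace_sum]
  refine Finset.sum_congr rfl fun j _ => ?_
  rw [Matrix.mul_assoc, Matrix.mul_assoc, Matrix.trace_mul_comm]
  rw [Matrix.mul_assoc, Matrix.mul_assoc]

lemma sum_tens_sum {d m i : ℕ} {ι κ : Type*} (s : Finset ι) (t : Finset κ)
    (f : ι → Mat d m) (g : κ → Mat d i) :
    tens (∑ x ∈ s, f x) (∑ y ∈ t, g y) = ∑ x ∈ s, ∑ y ∈ t, tens (f x) (g y) := by
  ext u v
  simp only [tens, Matrix.of_apply, Matrix.sum_apply]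
  rw [Finset.sum_mul_sum]

lemma adjPow_tens {d : ℕ} {J : Type} [Fintype J] (A : J → Matrix (Fin d) (Fin d) ℂ)
    {m i : ℕ} (X : Mat d m) (Y : Mat d i) :
    adjPow A (m + i) (tens X Y) = tens (adjPow A m X) (adjPow A i Y) := by
  unfold adjPow
  rw [← Equiv.sum_comp (splitFun (α := J) (m := m) (i := i))
    (fun j => (krausPow A j)ᴴ * tens X Y * krausPow A j), Fintype.sum_prod_type,
    sum_tens_sum]
  refine Finset.sum_congr rfl fun j1 _ => Finset.sum_congr rfl fun j2 _ => ?_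
  have hs : krausPow A (splitFun (j1, j2)) = tens (krausPow A j1) (krausPow A j2) := by
    rw [krausPow_split]
    congr 1 <;> ext k x y <;>
      simp [splitFun, krausPow, Fin.append_left, Fin.append_right]
  rw [hs, tens_conjTranspose, tens_mul, tens_mul]

lemma sum_krausPow_conj_mul {d : ℕ} {J : Type} [Fintype J]
    (A : J → Matrix (Fin d) (Fin d) ℂ) (hA : ∑ j, (A j)ᴴ * A j = 1) (m : ℕ) :
    ∑ j : Fin m → J, (krausPow A j)ᴴ * krausPow A j = 1 := by
  ext x y
  rw [Matrix.sum_apply]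
  have key : ∀ k : Fin m, ∑ p : J × Fin d, star (A p.1 p.2 (x k)) * A p.1 p.2 (y k)
      = (1 : Matrix (Fin d) (Fin d) ℂ) (x k) (y k) := by
    intro k
    rw [← hA, Matrix.sum_apply, Fintype.sum_prod_type]
    refine Finset.sum_congr rfl fun jj _ => ?_
    simp [Matrix.mul_apply, Matrix.conjTranspose_apply]
  calc ∑ j : Fin m → J, ((krausPow A j)ᴴ * krausPow A j) x y
      = ∑ j : Fin m → J, ∑ z : Fin m → Fin d,
          ∏ k, (star (A (j k) (z k) (x k)) * A (j k) (z k) (y k)) := by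
        refine Finset.sum_congr rfl fun j _ => ?_
        rw [Matrix.mul_apply]
        refine Finset.sum_congr rfl fun z _ => ?_
        simp [krausPow, Matrix.conjTranspose_apply, Finset.prod_mul_distrib]
    _ = ∑ p : (Fin m → J) × (Fin m → Fin d),
          ∏ k, (star (A (p.1 k) (p.2 k) (x k)) * A (p.1 k) (p.2 k) (y k)) := by
        rw [Fintype.sum_prod_type]
    _ = ∑ w : Fin m → J × Fin d,
          ∏ k, (star (A ((w k).1) ((w k).2) (x k)) * A ((w k).1) ((w k).2) (y k)) :=
        (Fintype.sum_equiv (Equiv.arrowProdEquivProdArrow _ _ _) _ _ fun w => rfl).symm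
    _ = ∏ k, ∑ p : J × Fin d, star (A p.1 p.2 (x k)) * A p.1 p.2 (y k) := by
        rw [Finset.prod_univ_sum, Fintype.piFinset_univ]
    _ = ∏ k, (1 : Matrix (Fin d) (Fin d) ℂ) (x k) (y k) := by
        exact Finset.prod_congr rfl fun k _ => key k
    _ = (1 : Mat d m) x y := by
        by_cases h : x = y
        · simp [h, Matrix.one_apply]
        · obtain ⟨k, hk⟩ := Function.ne_iff.mp h
          rw [Matrix.one_apply_ne h]
          exact Finset.prod_eq_zero (Finset.mem_univ k) (Matrix.one_apply_ne hk)

lemma adjPow_one {d : ℕ} {J : Type} [Fintype J]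
    (A : J → Matrix (Fin d) (Fin d) ℂ) (hA : ∑ j, (A j)ᴴ * A j = 1) (m : ℕ) :
    adjPow A m (1 : Mat d m) = 1 := by
  simp only [adjPow, Matrix.mul_one]
  exact sum_krausPow_conj_mul A hA m

/-- a memoryless channel maps a stationary ergodic quantum source
to an ergodic one. -/
theorem channel_preserves_ergodicity
    (d : ℕ) (hd : 2 ≤ d) (J : Type) [Fintype J]
    (A : J → Matrix (Fin d) (Fin d) ℂ) (hA : ∑ j, (A j)ᴴ * A j = 1)
    (ρ : ∀ m, Mat d m) (hρ : IsQSource d ρ) (hstat : QStationary d ρ)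
    (herg : QErgodic d ρ) :
    QErgodic d (fun m => channelPow A m (ρ m)) := by
  intro m hm a b
  have key : ∀ i : ℕ,
      ((fun m => channelPow A m (ρ m)) (m + (i - m) + m) *
        tens (tens a (1 : Mat d (i - m))) b).trace
      = (ρ (m + (i - m) + m) *
        tens (tens (adjPow A m a) (1 : Mat d (i - m))) (adjPow A m b)).trace := by
    intro i
    rw [trace_channelPow_mul, adjPow_tens, adjPow_tens, adjPow_one A hA]
  have H := herg m hm (adjPow A m a) (adjPow A m b)
  rw [← trace_channelPow_mul A m (ρ m) a, ← trace_channelPow_mul A m (ρ m) b] at H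
  refine H.congr fun n => ?_
  congr 1
  exact Finset.sum_congr rfl fun i _ => (key i).symm
end
end

section
/- Let (A_j)_{j∈J} be Kraus operators of a memoryless quantum channel. If a quantum source (ρ_m)_{m≥1} is stationary and strongly mixing, then the transformed family (E^{⊗m}(ρ_m))_{m≥1} is strongly mixing. -/
open Matrix Finset Filter Topology
open scoped ComplexOrder

noncomputable section

/-! ### Auxiliary machinery -/

/-- Splitting a function on `Fin (m + i)` into its two halves. -/
def splitEquiv (α : Type*) (m i : ℕ) : (Fin (m + i) → α) ≃ (Fin m → α) × (Fin i → α) where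
  toFun z := (fun k => z (Fin.castAdd i k), fun k => z (Fin.natAdd m k))
  invFun p := Fin.append p.1 p.2
  left_inv z := by
    funext x
    refine Fin.addCases (fun k => ?_) (fun k => ?_) x
    · simp [Fin.append_left]
    · simp [Fin.append_right]
  right_inv p := by
    refine Prod.ext ?_ ?_ <;> funext k
    · simp [Fin.append_left]
    · simp [Fin.append_right]

lemma sum_append {α : Type*} {M : Type*} [Fintype α] [AddCommMonoid M] {m i : ℕ}
    (F : (Fin (m + i) → α) → M) :
    ∑ z, F z = ∑ z1 : Fin m → α, ∑ z2 : Fin i → α, F (Fin.append z1 z2) := by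
  rw [← Equiv.sum_comp (splitEquiv α m i).symm F, Fintype.sum_prod_type]
  rfl

lemma sum_prod_pi {α : Type*} [Fintype α] {m : ℕ} (f : Fin m → α → ℂ) :
    ∑ z : Fin m → α, ∏ k, f k (z k) = ∏ k, ∑ a, f k a := by
  rw [Fintype.prod_sum]

lemma tens_castAdd {d m i : ℕ} (A : Mat d m) (B : Mat d i)
    (x y : Fin (m + i) → Fin d) :
    tens A B x y =
      A (fun k => x (Fin.castAdd i k)) (fun k => y (Fin.castAdd i k)) *
      B (fun k => x (Fin.natAdd m k)) (fun k => y (Fin.natAdd m k)) := rfl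

lemma sum_tens {d m i : ℕ} {ι : Type*} (s : Finset ι) (f : ι → Mat d m) (B : Mat d i) :
    tens (∑ j ∈ s, f j) B = ∑ j ∈ s, tens (f j) B := by
  ext x y
  simp [tens, Matrix.sum_apply, Finset.sum_mul]

lemma tens_sum {d m i : ℕ} {ι : Type*} (s : Finset ι) (A : Mat d m) (g : ι → Mat d i) :
    tens A (∑ j ∈ s, g j) = ∑ j ∈ s, tens A (g j) := by
  ext x y
  simp [tens, Matrix.sum_apply, Finset.mul_sum]

lemma krausPow_append {d : ℕ} {J : Type} [Fintype J] (A : J → Matrix (Fin d) (Fin d) ℂ)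
    {m i : ℕ} (j1 : Fin m → J) (j2 : Fin i → J) :
    krausPow A (Fin.append j1 j2) = tens (krausPow A j1) (krausPow A j2) := by
  ext x y
  simp [krausPow, tens, Fin.prod_univ_add, Fin.append_left, Fin.append_right]

/-- The adjoint (dual) of the induced channel map. -/
def dualPow {d : ℕ} {J : Type} [Fintype J] (A : J → Matrix (Fin d) (Fin d) ℂ)
    (m : ℕ) (X : Mat d m) : Mat d m :=
  ∑ j : Fin m → J, (krausPow A j)ᴴ * X * krausPow A j

lemma krausSum_one {d : ℕ} {J : Type} [Fintype J] {A : J → Matrix (Fin d) (Fin d) ℂ}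
    (hA : ∑ j, (A j)ᴴ * A j = 1) (m : ℕ) :
    ∑ j : Fin m → J, (krausPow A j)ᴴ * krausPow A j = 1 := by
  ext x y
  rw [Matrix.sum_apply]
  simp only [Matrix.mul_apply, Matrix.conjTranspose_apply, krausPow, Matrix.of_apply]
  calc ∑ j : Fin m → J, ∑ z : Fin m → Fin d,
        star (∏ k, A (j k) (z k) (x k)) * ∏ k, A (j k) (z k) (y k)
      = ∑ j : Fin m → J, ∏ k, ∑ z0 : Fin d,
          star (A (j k) z0 (x k)) * A (j k) z0 (y k) := by
        refine Finset.sum_congr rfl fun j _ => ?_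
        rw [← sum_prod_pi (fun k z0 => star (A (j k) z0 (x k)) * A (j k) z0 (y k))]
        refine Finset.sum_congr rfl fun z _ => ?_
        rw [star_prod, ← Finset.prod_mul_distrib]
    _ = ∏ k, ∑ j0 : J, ∑ z0 : Fin d,
          star (A j0 z0 (x k)) * A j0 z0 (y k) := by
        rw [← sum_prod_pi (fun k j0 => ∑ z0 : Fin d, star (A j0 z0 (x k)) * A j0 z0 (y k))]
    _ = ∏ k, (∑ j0 : J, (A j0)ᴴ * A j0) (x k) (y k) := by
        refine Finset.prod_congr rfl fun k _ => ?_
        rw [Matrix.sum_apply]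
        refine Finset.sum_congr rfl fun j0 _ => ?_
        simp [Matrix.mul_apply, Matrix.conjTranspose_apply]
    _ = (1 : Mat d m) x y := by
        rw [hA]
        simp only [Matrix.one_apply]
        rw [Fintype.prod_boole]
        simp [funext_iff, eq_comm]

lemma dualPow_tens {d : ℕ} {J : Type} [Fintype J] (A : J → Matrix (Fin d) (Fin d) ℂ)
    {m i : ℕ} (X : Mat d m) (Y : Mat d i) :
    dualPow A (m + i) (tens X Y) = tens (dualPow A m X) (dualPow A i Y) := by
  unfold dualPow
  rw [sum_append (fun j : Fin (m + i) → J => (krausPow A j)ᴴ * tens X Y * krausPow A j),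
    sum_tens]
  refine Finset.sum_congr rfl fun j1 _ => ?_
  rw [tens_sum]
  refine Finset.sum_congr rfl fun j2 _ => ?_
  rw [krausPow_append, tens_conjTranspose, tens_mul, tens_mul]

lemma dualPow_one {d : ℕ} {J : Type} [Fintype J] {A : J → Matrix (Fin d) (Fin d) ℂ}
    (hA : ∑ j, (A j)ᴴ * A j = 1) (m : ℕ) :
    dualPow A m (1 : Mat d m) = 1 := by
  unfold dualPow
  simp only [mul_one]
  exact krausSum_one hA m

lemma trace_channel_dual {d : ℕ} {J : Type} [Fintype J] (A : J → Matrix (Fin d) (Fin d) ℂ)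
    (m : ℕ) (σ X : Mat d m) :
    (channelPow A m σ * X).trace = (σ * dualPow A m X).trace := by
  unfold channelPow dualPow
  rw [Finset.sum_mul, Matrix.trace_sum, Finset.mul_sum, Matrix.trace_sum]
  refine Finset.sum_congr rfl fun j _ => ?_
  simp only [mul_assoc]
  rw [Matrix.trace_mul_comm]
  simp only [mul_assoc]

/-- a memoryless channel maps a stationary strongly mixing quantum
source to a strongly mixing one. -/
theorem channel_preserves_strong_mixing
    (d : ℕ) (hd : 2 ≤ d) (J : Type) [Fintype J]
    (A : J → Matrix (Fin d) (Fin d) ℂ) (hA : ∑ j, (A j)ᴴ * A j = 1)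
    (ρ : ∀ m, Mat d m) (hρ : IsQSource d ρ) (hstat : QStationary d ρ)
    (hsm : QStrongMixing d ρ) :
    QStrongMixing d (fun m => channelPow A m (ρ m)) := by
  intro m hm a b
  have key : ∀ i : ℕ,
      (channelPow A (m + (i - m) + m) (ρ (m + (i - m) + m)) *
          tens (tens a (1 : Mat d (i - m))) b).trace
        = (ρ (m + (i - m) + m) *
          tens (tens (dualPow A m a) (1 : Mat d (i - m))) (dualPow A m b)).trace := by
    intro i
    rw [trace_channel_dual, dualPow_tens, dualPow_tens, dualPow_one hA]
  have h2 : (channelPow A m (ρ m) * a).trace = (ρ m * dualPow A m a).trace :=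
    trace_channel_dual A m (ρ m) a
  have h3 : (channelPow A m (ρ m) * b).trace = (ρ m * dualPow A m b).trace :=
    trace_channel_dual A m (ρ m) b
  simp only [key, h2, h3]
  exact hsm m hm (dualPow A m a) (dualPow A m b)
end
end

section
/- Let ψ_1,…,ψ_d ∈ ℂ^d be linearly independent unit vectors and let p = (p_m)_{m≥1} be a consistent, stationary, and ergodic classical source on the alphabet Fin d. Then the classically correlated quantum source (ρ^{cls}_m)_{m≥1} is ergodic. -/
open Matrix Finset Filter Topology
open scoped ComplexOrder

noncomputable section

/-- Auxiliary functional: `Fv ψ a x = ⟨ψ_x, a ψ_x⟩`-style pairing. -/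
def Fv {d : ℕ} (ψ : Fin d → Fin d → ℂ) {m : ℕ} (a : Mat d m) (x : Fin m → Fin d) : ℂ :=
  ∑ v : Fin m → Fin d, ∑ u : Fin m → Fin d,
    (∏ k, star (ψ (x k) (v k))) * a v u * ∏ k, ψ (x k) (u k)

/-- Reindexing equivalence between pairs of words and words of combined length. -/
def appEquiv (d m i : ℕ) : ((Fin m → Fin d) × (Fin i → Fin d)) ≃ (Fin (m + i) → Fin d) where
  toFun p := Fin.append p.1 p.2
  invFun w := (fun k => w (Fin.castAdd i k), fun k => w (Fin.natAdd m k))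
  left_inv p := by
    ext k
    · simp [Fin.append_left]
    · simp [Fin.append_right]
  right_inv w := by
    funext k
    exact Fin.addCases (fun k => by simp [Fin.append_left])
      (fun k => by simp [Fin.append_right]) k

lemma sum_append_s7 {d m i : ℕ} (g : (Fin (m + i) → Fin d) → ℂ) :
    ∑ w, g w = ∑ x : Fin m → Fin d, ∑ z : Fin i → Fin d, g (Fin.append x z) := by
  rw [← Equiv.sum_comp (appEquiv d m i) g, Fintype.sum_prod_type]
  rfl

lemma trace_clsState_mul {d : ℕ} (ψ : Fin d → Fin d → ℂ) {m : ℕ}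
    (pm : (Fin m → Fin d) → ℝ) (a : Mat d m) :
    (clsState ψ pm * a).trace = ∑ x, (pm x : ℂ) * Fv ψ a x := by
  simp only [clsState, Matrix.trace, Matrix.diag, Matrix.mul_apply, Matrix.sum_apply,
    Matrix.smul_apply, Matrix.of_apply, smul_eq_mul, Fv, Finset.sum_mul, Finset.mul_sum]
  rw [Finset.sum_comm]
  refine Eq.trans (Finset.sum_congr rfl fun v _ => Finset.sum_comm) ?_
  rw [Finset.sum_comm]
  refine Finset.sum_congr rfl fun x _ => Finset.sum_congr rfl fun v _ =>
    Finset.sum_congr rfl fun u _ => ?_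
  rw [Finset.prod_mul_distrib]
  ring

lemma Fv_tens {d m i : ℕ} (ψ : Fin d → Fin d → ℂ) (a : Mat d m) (B : Mat d i)
    (x : Fin m → Fin d) (z : Fin i → Fin d) :
    Fv ψ (tens a B) (Fin.append x z) = Fv ψ a x * Fv ψ B z := by
  unfold Fv tens
  simp only [sum_append_s7]
  simp only [Matrix.of_apply, Fin.append_left, Fin.append_right, Fin.prod_univ_add]
  simp only [Finset.sum_mul_sum]
  refine Finset.sum_congr rfl fun v1 _ => Finset.sum_congr rfl fun v2 _ =>
    Finset.sum_congr rfl fun u1 _ => Finset.sum_congr rfl fun u2 _ => ?_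
  ring

lemma Fv_one {d i : ℕ} (ψ : Fin d → Fin d → ℂ)
    (hunit : ∀ j, ∑ k, star (ψ j k) * ψ j k = 1) (z : Fin i → Fin d) :
    Fv ψ (1 : Mat d i) z = 1 := by
  unfold Fv
  have h : ∀ v : Fin i → Fin d,
      (∑ u, (∏ k, star (ψ (z k) (v k))) * (1 : Mat d i) v u * ∏ k, ψ (z k) (u k))
        = ∏ k, star (ψ (z k) (v k)) * ψ (z k) (v k) := by
    intro v
    rw [Finset.sum_eq_single v]
    · simp [Matrix.one_apply, Finset.prod_mul_distrib]
    · intro u _ hu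
      simp [Matrix.one_apply_ne (Ne.symm hu)]
    · simp
  rw [Finset.sum_congr rfl fun v _ => h v]
  rw [show (Finset.univ : Finset (Fin i → Fin d)) = Fintype.piFinset fun _ => Finset.univ from
    (Fintype.piFinset_univ).symm,
    ← Finset.prod_univ_sum (f := fun (k : Fin i) (c : Fin d) => star (ψ (z k) c) * ψ (z k) c)]
  refine Finset.prod_eq_one fun k _ => ?_
  simpa using hunit (z k)

/-- a classically correlated quantum source built from an ergodic
classical source is ergodic. -/
theorem cls_source_ergodic
    (d : ℕ) (hd : 2 ≤ d) (ψ : Fin d → Fin d → ℂ)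
    (hind : LinearIndependent ℂ ψ)
    (hunit : ∀ i, ∑ k, star (ψ i k) * ψ i k = 1)
    (p : ∀ m, (Fin m → Fin d) → ℝ) (hp : IsCSource d p)
    (hc : CConsistent d p) (hs : CStationary d p) (he : CErgodic d p) :
    QErgodic d (fun m => clsState ψ (p m)) := by
  intro m hm a b
  -- rewrite the big traces
  have hbig : ∀ i : ℕ,
      (clsState ψ (p (m + (i - m) + m)) * tens (tens a (1 : Mat d (i - m))) b).trace
        = ∑ x : Fin m → Fin d, ∑ y : Fin m → Fin d,
            ((∑ z : Fin (i - m) → Fin d,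
              p (m + (i - m) + m) (Fin.append (Fin.append x z) y) : ℝ) : ℂ)
            * (Fv ψ a x * Fv ψ b y) := by
    intro i
    rw [trace_clsState_mul]
    simp only [sum_append_s7, Fv_tens, Fv_one ψ hunit, mul_one]
    refine Finset.sum_congr rfl fun x _ => ?_
    rw [Finset.sum_comm]
    refine Finset.sum_congr rfl fun y _ => ?_
    push_cast
    rw [Finset.sum_mul]
  -- rewrite the limit
  have hlim : (clsState ψ (p m) * a).trace * (clsState ψ (p m) * b).trace
      = ∑ x : Fin m → Fin d, ∑ y : Fin m → Fin d,
          ((p m x * p m y : ℝ) : ℂ) * (Fv ψ a x * Fv ψ b y) := by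
    rw [trace_clsState_mul, trace_clsState_mul, Finset.sum_mul_sum]
    refine Finset.sum_congr rfl fun x _ => Finset.sum_congr rfl fun y _ => ?_
    push_cast; ring
  rw [hlim]
  have hfun : ∀ n : ℕ,
      (n : ℂ)⁻¹ * ∑ i ∈ Finset.Icc m n,
        (clsState ψ (p (m + (i - m) + m)) * tens (tens a (1 : Mat d (i - m))) b).trace
      = ∑ x : Fin m → Fin d, ∑ y : Fin m → Fin d,
          (((n : ℝ)⁻¹ * ∑ i ∈ Finset.Icc m n, ∑ z : Fin (i - m) → Fin d,
            p (m + (i - m) + m) (Fin.append (Fin.append x z) y) : ℝ) : ℂ)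
          * (Fv ψ a x * Fv ψ b y) := by
    intro n
    simp only [hbig, Finset.mul_sum]
    rw [Finset.sum_comm]
    refine Finset.sum_congr rfl fun x _ => ?_
    rw [Finset.sum_comm]
    refine Finset.sum_congr rfl fun y _ => ?_
    push_cast
    simp only [Finset.mul_sum, Finset.sum_mul]
    refine Finset.sum_congr rfl fun i _ => Finset.sum_congr rfl fun z _ => ?_
    ring
  simp only [hfun]
  refine tendsto_finset_sum _ fun x _ => tendsto_finset_sum _ fun y _ => ?_
  have := (Complex.continuous_ofReal.tendsto (p m x * p m y)).comp (he m hm x y)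
  exact this.mul_const _
end
end

section
/- Let ψ_1,…,ψ_d ∈ ℂ^d be linearly independent unit vectors and let p = (p_m)_{m≥1} be a consistent, stationary, and strongly mixing classical source on the alphabet Fin d. Then the classically correlated quantum source (ρ^{cls}_m)_{m≥1} is strongly mixing. -/
open Matrix Finset Filter Topology
open scoped ComplexOrder

noncomputable section

def trO {d m : ℕ} (ψ : Fin d → Fin d → ℂ) (A : Mat d m) (x : Fin m → Fin d) : ℂ :=
  ∑ u : Fin m → Fin d, ∑ v : Fin m → Fin d,
    (∏ k, ψ (x k) (u k) * star (ψ (x k) (v k))) * A v u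

lemma append_bijective (d a b : ℕ) :
    Function.Bijective (fun p : ((Fin a → Fin d) × (Fin b → Fin d)) =>
      Fin.append p.1 p.2) := by
  rw [Fintype.bijective_iff_injective_and_card]
  constructor
  · rintro ⟨x1, x2⟩ ⟨y1, y2⟩ h
    have h1 : x1 = y1 := funext fun k => by
      simpa using congrFun h (Fin.castAdd b k)
    have h2 : x2 = y2 := funext fun k => by
      simpa using congrFun h (Fin.natAdd a k)
    simp [h1, h2]
  · simp [pow_add]

lemma sum_words_add {d a b : ℕ} (f : (Fin (a + b) → Fin d) → ℂ) :
    ∑ x : Fin (a + b) → Fin d, f x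
      = ∑ x : Fin a → Fin d, ∑ y : Fin b → Fin d, f (Fin.append x y) := by
  rw [← Fintype.sum_bijective _ (append_bijective d a b)
    (fun p => f (Fin.append p.1 p.2)) f (fun p => rfl), Fintype.sum_prod_type]

lemma sum_rot {α β γ M : Type*} [Fintype α] [Fintype β] [Fintype γ] [AddCommMonoid M]
    (t : α → β → γ → M) :
    ∑ u : α, ∑ v : β, ∑ x : γ, t u v x = ∑ x : γ, ∑ u : α, ∑ v : β, t u v x := by
  trans (∑ u : α, ∑ x : γ, ∑ v : β, t u v x)
  · exact Finset.sum_congr rfl fun u _ => Finset.sum_comm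
  · exact Finset.sum_comm

lemma trace_cls {d m : ℕ} (ψ : Fin d → Fin d → ℂ) (P : (Fin m → Fin d) → ℝ) (A : Mat d m) :
    (clsState ψ P * A).trace = ∑ x : Fin m → Fin d, (P x : ℂ) * trO ψ A x := by
  simp only [Matrix.trace, Matrix.diag, Matrix.mul_apply, clsState, Matrix.sum_apply,
    Matrix.smul_apply, Matrix.of_apply, smul_eq_mul, Finset.sum_mul, trO, Finset.mul_sum]
  rw [sum_rot]
  exact Finset.sum_congr rfl fun x _ => Finset.sum_congr rfl fun u _ =>
    Finset.sum_congr rfl fun v _ => by ring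

lemma trO_tens {d a b : ℕ} (ψ : Fin d → Fin d → ℂ) (A : Mat d a) (B : Mat d b)
    (x : Fin a → Fin d) (y : Fin b → Fin d) :
    trO ψ (tens A B) (Fin.append x y) = trO ψ A x * trO ψ B y := by
  simp only [trO]
  simp only [sum_words_add (d := d) (a := a) (b := b)]
  simp only [tens, Matrix.of_apply, Fin.prod_univ_add, Fin.append_left, Fin.append_right]
  rw [Finset.sum_mul_sum]
  refine Finset.sum_congr rfl fun u1 _ => Finset.sum_congr rfl fun u2 _ => ?_
  rw [Finset.sum_mul_sum]
  exact Finset.sum_congr rfl fun v1 _ => Finset.sum_congr rfl fun v2 _ => by ring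

lemma trO_one {d n : ℕ} (ψ : Fin d → Fin d → ℂ)
    (hunit : ∀ i, ∑ k, star (ψ i k) * ψ i k = 1) (z : Fin n → Fin d) :
    trO ψ (1 : Mat d n) z = 1 := by
  simp only [trO, Matrix.one_apply]
  have h1 : ∀ u : Fin n → Fin d,
      (∑ v : Fin n → Fin d,
        (∏ k, ψ (z k) (u k) * star (ψ (z k) (v k))) * (if v = u then (1:ℂ) else 0))
      = ∏ k, ψ (z k) (u k) * star (ψ (z k) (u k)) := by
    intro u
    rw [Finset.sum_eq_single u]
    · simp
    · intro v _ hv; simp [hv]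
    · simp
  simp only [h1]
  have key : (∑ x : Fin n → Fin d, ∏ k, ψ (z k) (x k) * star (ψ (z k) (x k)))
      = ∏ k : Fin n, ∑ j : Fin d, ψ (z k) j * star (ψ (z k) j) :=
    (Fintype.prod_sum fun (k : Fin n) (j : Fin d) => ψ (z k) j * star (ψ (z k) j)).symm
  rw [key]
  refine Finset.prod_eq_one fun k _ => ?_
  rw [← hunit (z k)]
  exact Finset.sum_congr rfl fun j _ => mul_comm _ _

/-- a classically correlated quantum source built from a strongly
mixing classical source is strongly mixing. -/
theorem cls_source_strong_mixing
    (d : ℕ) (hd : 2 ≤ d) (ψ : Fin d → Fin d → ℂ)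
    (hind : LinearIndependent ℂ ψ)
    (hunit : ∀ i, ∑ k, star (ψ i k) * ψ i k = 1)
    (p : ∀ m, (Fin m → Fin d) → ℝ) (hp : IsCSource d p)
    (hc : CConsistent d p) (hs : CStationary d p) (hsm : CStrongMixing d p) :
    QStrongMixing d (fun m => clsState ψ (p m)) := by
  intro m hm a b
  have key : ∀ n : ℕ,
      (clsState ψ (p (m + n + m)) * tens (tens a (1 : Mat d n)) b).trace
        = ∑ x1 : Fin m → Fin d, ∑ x2 : Fin m → Fin d,
            ((∑ z : Fin n → Fin d,
                p (m + n + m) (Fin.append (Fin.append x1 z) x2) : ℝ) : ℂ)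
              * (trO ψ a x1 * trO ψ b x2) := by
    intro n
    rw [trace_cls, sum_words_add (d := d) (a := m + n) (b := m),
      sum_words_add (d := d) (a := m) (b := n)]
    simp only [trO_tens, trO_one ψ hunit, mul_one]
    simp only [Complex.ofReal_sum, Finset.sum_mul]
    refine Finset.sum_congr rfl fun x1 _ => ?_
    rw [Finset.sum_comm]
  have hval : ((clsState ψ (p m)) * a).trace * ((clsState ψ (p m)) * b).trace
      = ∑ x1 : Fin m → Fin d, ∑ x2 : Fin m → Fin d,
          ((p m x1 * p m x2 : ℝ) : ℂ) * (trO ψ a x1 * trO ψ b x2) := by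
    rw [trace_cls, trace_cls, Finset.sum_mul_sum]
    exact Finset.sum_congr rfl fun x1 _ => Finset.sum_congr rfl fun x2 _ => by
      push_cast; ring
  show Tendsto (fun i : ℕ =>
      (clsState ψ (p (m + (i - m) + m)) * tens (tens a (1 : Mat d (i - m))) b).trace)
    atTop (nhds (((clsState ψ (p m)) * a).trace * ((clsState ψ (p m)) * b).trace))
  rw [hval]
  refine Tendsto.congr (fun i => (key (i - m)).symm) ?_
  refine tendsto_finset_sum _ fun x1 _ => tendsto_finset_sum _ fun x2 _ => ?_
  exact ((Complex.continuous_ofReal.tendsto _).comp (hsm m hm x1 x2)).mul_const _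
end
end

section
/- Let (ρ_m)_{m≥1} be a consistent, stationary, and ergodic quantum source and let (u_1,…,u_d) be an orthonormal basis of ℂ^d. For each m ≥ 1 and each word x : Fin m → Fin d define p_m(x) := ⟨u_{x(1)} ⊗ ⋯ ⊗ u_{x(m)}, ρ_m (u_{x(1)} ⊗ ⋯ ⊗ u_{x(m)})⟩. Then each p_m is a probability distribution on words of length m, and (p_m)_{m≥1} is a consistent, stationary, and ergodic classical source on the alphabet Fin d. -/
open Matrix Finset Filter Topology
open scoped ComplexOrder

noncomputable section

namespace Aux

variable {d : ℕ} (u : Fin d → Fin d → ℂ)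

def pvec {m : ℕ} (x : Fin m → Fin d) : (Fin m → Fin d) → ℂ := fun v => ∏ k, u (x k) (v k)

def proj {m : ℕ} (x : Fin m → Fin d) : Mat d m :=
  Matrix.of fun v w => pvec u x v * star (pvec u x w)

lemma trace_mul_proj {m : ℕ} (ρ : Mat d m) (x : Fin m → Fin d) :
    (ρ * proj u x).trace = star (pvec u x) ⬝ᵥ (ρ *ᵥ pvec u x) := by
  simp only [Matrix.trace, Matrix.diag, Matrix.mul_apply, proj, Matrix.of_apply,
    dotProduct, Matrix.mulVec, Pi.star_apply, Finset.mul_sum]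
  exact Finset.sum_congr rfl fun v _ => Finset.sum_congr rfl fun w _ => by ring

lemma measProb_eq {m : ℕ} (ρ : Mat d m) (x : Fin m → Fin d) :
    measProb ρ u x = ((ρ * proj u x).trace).re := by
  rw [trace_mul_proj]
  unfold measProb
  congr 1
  simp only [dotProduct, Matrix.mulVec, Pi.star_apply, Finset.mul_sum, pvec]
  exact Finset.sum_congr rfl fun v _ => Finset.sum_congr rfl fun w _ => by ring

lemma trace_mul_proj_nonneg {m : ℕ} {ρ : Mat d m} (hρ : ρ.PosSemidef) (x : Fin m → Fin d) :
    0 ≤ (ρ * proj u x).trace := by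
  rw [trace_mul_proj]; exact hρ.dotProduct_mulVec_nonneg _

lemma coe_measProb {m : ℕ} {ρ : Mat d m} (hρ : ρ.PosSemidef) (x : Fin m → Fin d) :
    ((measProb ρ u x : ℝ) : ℂ) = (ρ * proj u x).trace := by
  rw [measProb_eq]
  exact (Complex.eq_re_of_ofReal_le (trace_mul_proj_nonneg u hρ x)).symm

variable (hu : ∀ i j, ∑ k, star (u i k) * u j k = if i = j then (1 : ℂ) else 0)
include hu

lemma complete (a b : Fin d) :
    ∑ j, u j a * star (u j b) = if a = b then (1 : ℂ) else 0 := by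
  set U : Matrix (Fin d) (Fin d) ℂ := Matrix.of u with hU
  have h1 : U * Uᴴ = 1 := by
    ext i j
    have := congrArg star (hu i j)
    simpa [Matrix.mul_apply, Matrix.conjTranspose_apply, star_sum, mul_comm,
      apply_ite (star : ℂ → ℂ), eq_comm (a := i) (b := j), Matrix.one_apply, hU] using this
  have h2 : Uᴴ * U = 1 := mul_eq_one_comm.mp h1
  have h4 : ∑ j, star (u j a) * u j b = if a = b then (1 : ℂ) else 0 := by
    have := congrArg (fun M : Matrix (Fin d) (Fin d) ℂ => M a b) h2
    simpa [Matrix.mul_apply, Matrix.conjTranspose_apply, Matrix.one_apply, hU] using this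
  calc ∑ j, u j a * star (u j b) = star (∑ j, star (u j a) * u j b) := by
        simp [star_sum, mul_comm]
    _ = if a = b then (1 : ℂ) else 0 := by rw [h4]; simp [apply_ite (star : ℂ → ℂ)]

lemma sum_proj (m : ℕ) : ∑ x : Fin m → Fin d, proj u x = 1 := by
  ext v w
  have key : ∀ x : Fin m → Fin d,
      proj u x v w = ∏ k, (u (x k) (v k) * star (u (x k) (w k))) := fun x => by
    simp [proj, pvec, star_prod, Finset.prod_mul_distrib]
  simp only [Matrix.sum_apply, key]
  rw [← Fintype.prod_sum (fun (k : Fin m) (j : Fin d) => u j (v k) * star (u j (w k)))]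
  simp only [complete u hu]
  rw [Finset.prod_boole]
  simp [Matrix.one_apply, funext_iff]

omit hu in
lemma tens_sum_right {m i : ℕ} {ι : Type*} (A : Mat d m) (s : Finset ι) (B : ι → Mat d i) :
    tens A (∑ j ∈ s, B j) = ∑ j ∈ s, tens A (B j) := by
  ext v w; simp [tens, Matrix.sum_apply, Finset.mul_sum]

omit hu in
lemma tens_sum_left {m i : ℕ} {ι : Type*} (s : Finset ι) (A : ι → Mat d m) (B : Mat d i) :
    tens (∑ j ∈ s, A j) B = ∑ j ∈ s, tens (A j) B := by
  ext v w; simp [tens, Matrix.sum_apply, Finset.sum_mul]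

omit hu in
lemma tens_proj {m i : ℕ} (x : Fin m → Fin d) (y : Fin i → Fin d) :
    tens (proj u x) (proj u y) = proj u (Fin.append x y) := by
  ext v w
  simp only [tens, proj, pvec, Matrix.of_apply, Fin.prod_univ_add, Fin.append_left,
    Fin.append_right, star_mul']
  ring

include hu

lemma tens_proj_one {m i : ℕ} (x : Fin m → Fin d) :
    tens (proj u x) (1 : Mat d i) = ∑ y : Fin i → Fin d, proj u (Fin.append x y) := by
  rw [← sum_proj u hu i, tens_sum_right]
  exact Finset.sum_congr rfl fun y _ => tens_proj u x y

lemma tens_one_proj {m i : ℕ} (x : Fin m → Fin d) :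
    tens (1 : Mat d i) (proj u x) = ∑ y : Fin i → Fin d, proj u (Fin.append y x) := by
  rw [← sum_proj u hu i, tens_sum_left]
  exact Finset.sum_congr rfl fun y _ => tens_proj u y x

lemma re_trace_right {m i : ℕ} (σ : Mat d (m + i)) (x : Fin m → Fin d) :
    ((σ * tens (proj u x) (1 : Mat d i)).trace).re
      = ∑ y : Fin i → Fin d, measProb σ u (Fin.append x y) := by
  rw [tens_proj_one u hu, Finset.mul_sum, Matrix.trace_sum, Complex.re_sum]
  exact Finset.sum_congr rfl fun y _ => (measProb_eq u σ _).symm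

lemma re_trace_left {m i : ℕ} (σ : Mat d (i + m)) (x : Fin m → Fin d) :
    ((σ * tens (1 : Mat d i) (proj u x)).trace).re
      = ∑ y : Fin i → Fin d, measProb σ u (Fin.append y x) := by
  rw [tens_one_proj u hu, Finset.mul_sum, Matrix.trace_sum, Complex.re_sum]
  exact Finset.sum_congr rfl fun y _ => (measProb_eq u σ _).symm

lemma re_trace_mid {m j : ℕ} (σ : Mat d (m + j + m)) (x y : Fin m → Fin d) :
    ((σ * tens (tens (proj u x) (1 : Mat d j)) (proj u y)).trace).re
      = ∑ z : Fin j → Fin d, measProb σ u (Fin.append (Fin.append x z) y) := by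
  have h1 : tens (tens (proj u x) (1 : Mat d j)) (proj u y)
      = ∑ z : Fin j → Fin d, proj u (Fin.append (Fin.append x z) y) := by
    rw [tens_proj_one u hu, tens_sum_left]
    exact Finset.sum_congr rfl fun z _ => tens_proj u _ y
  rw [h1, Finset.mul_sum, Matrix.trace_sum, Complex.re_sum]
  exact Finset.sum_congr rfl fun z _ => (measProb_eq u σ _).symm

end Aux


/-- restricting a consistent stationary ergodic quantum source to
the classical subsystem of a product orthonormal basis gives a consistent
stationary ergodic classical source. -/
theorem restriction_to_classical_subsystem
    (d : ℕ) (hd : 2 ≤ d) (ρ : ∀ m, Mat d m)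
    (hρ : IsQSource d ρ) (hc : QConsistent d ρ) (hs : QStationary d ρ)
    (he : QErgodic d ρ)
    (u : Fin d → Fin d → ℂ)
    (hu : ∀ i j, ∑ k, star (u i k) * u j k = if i = j then (1 : ℂ) else 0) :
    IsCSource d (fun m x => measProb (ρ m) u x) ∧
      CConsistent d (fun m x => measProb (ρ m) u x) ∧
      CStationary d (fun m x => measProb (ρ m) u x) ∧
      CErgodic d (fun m x => measProb (ρ m) u x) := by
  have hP : ∀ m, 1 ≤ m → (ρ m).PosSemidef := fun m hm => (hρ m hm).1
  refine ⟨?_, ?_, ?_, ?_⟩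
  · intro m hm
    constructor
    · intro x
      dsimp only
      rw [Aux.measProb_eq u]
      exact (Complex.nonneg_iff.mp (Aux.trace_mul_proj_nonneg u (hP m hm) x)).1
    · have h1 : ∑ x : Fin m → Fin d, ((measProb (ρ m) u x : ℝ) : ℂ) = 1 := by
        simp only [Aux.coe_measProb u (hP m hm)]
        rw [← Matrix.trace_sum, ← Finset.mul_sum, Aux.sum_proj u hu m, mul_one, (hρ m hm).2]
      exact_mod_cast h1
  · intro m i hm hi x
    dsimp only
    rw [Aux.measProb_eq u, hc m i hm hi (Aux.proj u x), Aux.re_trace_right u hu]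
  · intro m i hm hi x
    dsimp only
    rw [Aux.measProb_eq u, hs m i hm hi (Aux.proj u x), Aux.re_trace_left u hu]
  · intro m hm x y
    have hq := he m hm (Aux.proj u x) (Aux.proj u y)
    have h2 := (Complex.continuous_re.tendsto _).comp hq
    have hfun : ∀ n : ℕ,
        (Complex.re ∘ fun n : ℕ => (n:ℂ)⁻¹ * ∑ i ∈ Finset.Icc m n,
          (ρ (m + (i - m) + m) * tens (tens (Aux.proj u x) (1 : Mat d (i - m)))
            (Aux.proj u y)).trace) n
          = (n:ℝ)⁻¹ * ∑ i ∈ Finset.Icc m n, ∑ z : Fin (i-m) → Fin d,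
              measProb (ρ (m + (i - m) + m)) u (Fin.append (Fin.append x z) y) := by
      intro n
      simp only [Function.comp]
      rw [show ((n:ℕ):ℂ)⁻¹ = (((n:ℝ)⁻¹ : ℝ) : ℂ) by push_cast; rfl,
        Complex.re_ofReal_mul, Complex.re_sum]
      congr 1
      exact Finset.sum_congr rfl fun i _ => Aux.re_trace_mid u hu _ x y
    have hlim : ((ρ m * Aux.proj u x).trace * (ρ m * Aux.proj u y).trace).re
        = measProb (ρ m) u x * measProb (ρ m) u y := by
      rw [← Aux.coe_measProb u (hP m hm) x, ← Aux.coe_measProb u (hP m hm) y,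
        ← Complex.ofReal_mul, Complex.ofReal_re]
    exact hlim ▸ h2.congr hfun
end
end

section
/- Let p = (p_m)_{m≥1} be a consistent classical source on the alphabet Fin d, let (e_1,…,e_d) be the standard orthonormal basis of ℂ^d, and let D_m := ∑_{x : Fin m → Fin d} p_m(x)·(e_{x(1)}e_{x(1)}† ⊗ ⋯ ⊗ e_{x(m)}e_{x(m)}†) be the associated diagonal density matrices. Then (D_m)_{m≥1} is weakly mixing if and only if p is weakly mixing, and (D_m)_{m≥1} is strongly mixing if and only if p is strongly mixing. -/
open Matrix Finset Filter Topology
open scoped ComplexOrder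

noncomputable section

lemma clsState_diag {d m : ℕ} (pm : (Fin m → Fin d) → ℝ) :
    clsState (fun i k => if k = i then (1 : ℂ) else 0) pm
      = Matrix.of (fun u v => if u = v then (pm u : ℂ) else 0) := by
  ext u v
  simp only [clsState, Matrix.sum_apply, Matrix.smul_apply, Matrix.of_apply, smul_eq_mul]
  have key : ∀ x : Fin m → Fin d,
      (∏ k, (if u k = x k then (1:ℂ) else 0) * star (if v k = x k then (1:ℂ) else 0))
        = if x = u ∧ x = v then 1 else 0 := by
    intro x
    have step : ∀ k : Fin m,
        (if u k = x k then (1:ℂ) else 0) * star (if v k = x k then (1:ℂ) else 0)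
          = if u k = x k ∧ v k = x k then 1 else 0 := by
      intro k
      by_cases h1 : u k = x k <;> by_cases h2 : v k = x k <;> simp [h1, h2]
    rw [Finset.prod_congr rfl fun k _ => step k, Finset.prod_boole]
    have hiff : (∀ k ∈ Finset.univ, u k = x k ∧ v k = x k) ↔ (x = u ∧ x = v) := by
      simp only [Finset.mem_univ, true_implies]
      rw [forall_and]
      constructor
      · rintro ⟨h1, h2⟩; exact ⟨(funext h1).symm, (funext h2).symm⟩
      · rintro ⟨rfl, rfl⟩; exact ⟨fun _ => rfl, fun _ => rfl⟩
    simp only [hiff]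
  calc ∑ x : Fin m → Fin d, (pm x : ℂ) * ∏ k,
        (if u k = x k then (1:ℂ) else 0) * star (if v k = x k then (1:ℂ) else 0)
      = ∑ x : Fin m → Fin d, (pm x : ℂ) * if x = u ∧ x = v then 1 else 0 := by
        exact Finset.sum_congr rfl fun x _ => by rw [key x]
    _ = if u = v then (pm u : ℂ) else 0 := by
        rw [Finset.sum_eq_single u]
        · by_cases h : u = v <;> simp [h]
        · intro x _ hx; simp [hx]
        · intro h; exact absurd (Finset.mem_univ u) h

lemma trace_diag_mul {d m : ℕ} (pm : (Fin m → Fin d) → ℝ) (M : Mat d m) :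
    (clsState (fun i k => if k = i then (1 : ℂ) else 0) pm * M).trace
      = ∑ u, (pm u : ℂ) * M u u := by
  rw [clsState_diag]
  simp [Matrix.trace, Matrix.diag, Matrix.mul_apply, ite_mul]

def splitE (d m j : ℕ) :
    ((Fin m → Fin d) × (Fin j → Fin d) × (Fin m → Fin d)) ≃ (Fin (m + j + m) → Fin d) where
  toFun t := Fin.append (Fin.append t.1 t.2.1) t.2.2
  invFun w := (fun k => w (Fin.castAdd m (Fin.castAdd j k)),
               fun k => w (Fin.castAdd m (Fin.natAdd m k)),
               fun k => w (Fin.natAdd (m + j) k))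
  left_inv := by
    rintro ⟨x, z, y⟩
    refine Prod.ext ?_ (Prod.ext ?_ ?_) <;> funext k <;>
      simp [Fin.append_left, Fin.append_right]
  right_inv := by
    intro w
    funext k
    refine Fin.addCases (fun k1 => ?_) (fun k2 => ?_) k
    · refine Fin.addCases (fun k3 => ?_) (fun k4 => ?_) k1 <;>
        simp [Fin.append_left, Fin.append_right]
    · simp [Fin.append_right]

lemma trace_formula {d m j : ℕ} (pm : (Fin (m + j + m) → Fin d) → ℝ) (a b : Mat d m) :
    (clsState (fun i k => if k = i then (1 : ℂ) else 0) pm * tens (tens a (1 : Mat d j)) b).trace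
      = ∑ x : Fin m → Fin d, ∑ y : Fin m → Fin d,
          a x x * b y y *
            ((∑ z : Fin j → Fin d, pm (Fin.append (Fin.append x z) y) : ℝ) : ℂ) := by
  rw [trace_diag_mul]
  rw [← Equiv.sum_comp (splitE d m j)
      (fun w => (pm w : ℂ) * (tens (tens a (1 : Mat d j)) b) w w)]
  have ev : ∀ (x : Fin m → Fin d) (z : Fin j → Fin d) (y : Fin m → Fin d),
      (tens (tens a (1 : Mat d j)) b)
          (Fin.append (Fin.append x z) y) (Fin.append (Fin.append x z) y)
        = a x x * b y y := by
    intro x z y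
    simp [tens, Fin.append_left, Fin.append_right, Matrix.one_apply_eq]
  rw [Fintype.sum_prod_type]
  refine Finset.sum_congr rfl fun x _ => ?_
  rw [Fintype.sum_prod_type, Finset.sum_comm]
  refine Finset.sum_congr rfl fun y _ => ?_
  simp only [splitE, Equiv.coe_fn_mk, ev]
  push_cast
  rw [← Finset.sum_mul, mul_comm]

lemma eMat_collapse {d m : ℕ} (x y : Fin m → Fin d) (F : (Fin m → Fin d) → (Fin m → Fin d) → ℂ) :
    (∑ x' : Fin m → Fin d, ∑ y' : Fin m → Fin d,
      (Matrix.of (fun u v => if u = x ∧ v = x then (1:ℂ) else 0) : Mat d m) x' x' *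
      (Matrix.of (fun u v => if u = y ∧ v = y then (1:ℂ) else 0) : Mat d m) y' y' * F x' y')
      = F x y := by
  simp [and_self, ite_mul, Finset.sum_ite_eq']

lemma trace_eMat {d m : ℕ} (pm : (Fin m → Fin d) → ℝ) (x : Fin m → Fin d) :
    (clsState (fun i k => if k = i then (1 : ℂ) else 0) pm *
       Matrix.of (fun u v => if u = x ∧ v = x then (1:ℂ) else 0)).trace = (pm x : ℂ) := by
  rw [trace_diag_mul]
  simp [and_self, mul_ite, Finset.sum_ite_eq']

set_option maxHeartbeats 1600000 in
/-- for the diagonal density matrices built from a consistent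
classical source `p` on the standard basis, weak (resp. strong) mixing of the
quantum family is equivalent to weak (resp. strong) mixing of `p`. -/
theorem diagonal_source_mixing_iff
    (d : ℕ) (hd : 2 ≤ d)
    (p : ∀ m, (Fin m → Fin d) → ℝ) (hp : IsCSource d p) (hc : CConsistent d p) :
    (QWeakMixing d (fun m => clsState (fun i k => if k = i then (1 : ℂ) else 0) (p m))
      ↔ CWeakMixing d p) ∧
    (QStrongMixing d (fun m => clsState (fun i k => if k = i then (1 : ℂ) else 0) (p m))
      ↔ CStrongMixing d p) := by
  classical
  clear hd hp hc
  have keyT : ∀ (m i : ℕ) (a b : Mat d m),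
      (clsState (fun i k => if k = i then (1 : ℂ) else 0) (p (m + (i - m) + m)) *
          tens (tens a (1 : Mat d (i - m))) b).trace
        = ∑ x : Fin m → Fin d, ∑ y : Fin m → Fin d,
            a x x * b y y *
              ((∑ z : Fin (i - m) → Fin d,
                  p (m + (i - m) + m) (Fin.append (Fin.append x z) y) : ℝ) : ℂ) :=
    fun m i a b => trace_formula _ a b
  have keyL : ∀ (m : ℕ) (a b : Mat d m),
      (clsState (fun i k => if k = i then (1 : ℂ) else 0) (p m) * a).trace *
        (clsState (fun i k => if k = i then (1 : ℂ) else 0) (p m) * b).trace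
        = ∑ x : Fin m → Fin d, ∑ y : Fin m → Fin d,
            a x x * b y y * ((p m x * p m y : ℝ) : ℂ) := by
    intro m a b
    rw [trace_diag_mul, trace_diag_mul, Finset.sum_mul_sum]
    refine Finset.sum_congr rfl fun x _ => Finset.sum_congr rfl fun y _ => ?_
    push_cast; ring
  constructor
  · -- weak mixing
    constructor
    · intro hQ m hm x y
      have h := hQ m hm (Matrix.of fun u v => if u = x ∧ v = x then (1:ℂ) else 0)
                        (Matrix.of fun u v => if u = y ∧ v = y then (1:ℂ) else 0)
      simp only [keyT, eMat_collapse, trace_eMat, ← Complex.ofReal_mul,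
        ← Complex.ofReal_sub, Complex.norm_real, Real.norm_eq_abs] at h
      exact h
    · intro hC m hm a b
      simp only [keyT, keyL]
      have hsub : ∀ i : ℕ,
          (∑ x : Fin m → Fin d, ∑ y : Fin m → Fin d, a x x * b y y *
              ((∑ z : Fin (i - m) → Fin d,
                  p (m + (i - m) + m) (Fin.append (Fin.append x z) y) : ℝ) : ℂ))
            - ∑ x : Fin m → Fin d, ∑ y : Fin m → Fin d,
                a x x * b y y * ((p m x * p m y : ℝ) : ℂ)
          = ∑ x : Fin m → Fin d, ∑ y : Fin m → Fin d, a x x * b y y *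
              (((∑ z : Fin (i - m) → Fin d,
                  p (m + (i - m) + m) (Fin.append (Fin.append x z) y) : ℝ) : ℂ)
                - ((p m x * p m y : ℝ) : ℂ)) := by
        intro i
        rw [← Finset.sum_sub_distrib]
        refine Finset.sum_congr rfl fun x _ => ?_
        rw [← Finset.sum_sub_distrib]
        exact Finset.sum_congr rfl fun y _ => by ring
      have habs : ∀ i : ℕ, ‖
          ((∑ x : Fin m → Fin d, ∑ y : Fin m → Fin d, a x x * b y y *
              ((∑ z : Fin (i - m) → Fin d,
                  p (m + (i - m) + m) (Fin.append (Fin.append x z) y) : ℝ) : ℂ))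
            - ∑ x : Fin m → Fin d, ∑ y : Fin m → Fin d,
                a x x * b y y * ((p m x * p m y : ℝ) : ℂ))‖
          ≤ ∑ x : Fin m → Fin d, ∑ y : Fin m → Fin d,
              ‖a x x * b y y‖ *
                |(∑ z : Fin (i - m) → Fin d,
                    p (m + (i - m) + m) (Fin.append (Fin.append x z) y))
                  - p m x * p m y| := by
        intro i
        rw [hsub i]
        refine (norm_sum_le _ _).trans (Finset.sum_le_sum fun x _ => ?_)
        refine (norm_sum_le _ _).trans (Finset.sum_le_sum fun y _ => ?_)
        rw [norm_mul, ← Complex.ofReal_sub, Complex.norm_real, Real.norm_eq_abs]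
      refine tendsto_of_tendsto_of_tendsto_of_le_of_le
        (g := fun _ : ℕ => (0:ℝ))
        (h := fun n : ℕ => ∑ x : Fin m → Fin d, ∑ y : Fin m → Fin d,
          ‖a x x * b y y‖ *
            ((n:ℝ)⁻¹ * ∑ i ∈ Finset.Icc m n,
              |(∑ z : Fin (i - m) → Fin d,
                  p (m + (i - m) + m) (Fin.append (Fin.append x z) y))
                - p m x * p m y|))
        tendsto_const_nhds ?_ ?_ ?_
      · have := tendsto_finset_sum (Finset.univ : Finset (Fin m → Fin d)) fun x _ =>
          tendsto_finset_sum (Finset.univ : Finset (Fin m → Fin d)) fun y _ =>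
            ((hC m hm x y).const_mul ‖a x x * b y y‖)
        simpa only [mul_zero, Finset.sum_const_zero] using this
      · intro n
        exact mul_nonneg (by positivity)
          (Finset.sum_nonneg fun i _ => norm_nonneg _)
      · intro n
        have step1 := Finset.sum_le_sum (fun i (_ : i ∈ Finset.Icc m n) => habs i)
        calc (n:ℝ)⁻¹ * ∑ i ∈ Finset.Icc m n, ‖_‖
            ≤ (n:ℝ)⁻¹ * ∑ i ∈ Finset.Icc m n,
                ∑ x : Fin m → Fin d, ∑ y : Fin m → Fin d,
                  ‖a x x * b y y‖ *
                    |(∑ z : Fin (i - m) → Fin d,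
                        p (m + (i - m) + m) (Fin.append (Fin.append x z) y))
                      - p m x * p m y| :=
              mul_le_mul_of_nonneg_left step1 (by positivity)
          _ = _ := by
              simp only [Finset.mul_sum]
              rw [Finset.sum_comm]
              refine Finset.sum_congr rfl fun x _ => ?_
              rw [Finset.sum_comm]
              refine Finset.sum_congr rfl fun y _ => ?_
              exact Finset.sum_congr rfl fun i _ => by ring
  · -- strong mixing
    constructor
    · intro hQ m hm x y
      have h := hQ m hm (Matrix.of fun u v => if u = x ∧ v = x then (1:ℂ) else 0)
                        (Matrix.of fun u v => if u = y ∧ v = y then (1:ℂ) else 0)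
      simp only [keyT, eMat_collapse, trace_eMat, ← Complex.ofReal_mul] at h
      have h2 := (Complex.continuous_re.tendsto _).comp h
      simpa only [Function.comp_def, ← Complex.ofReal_sum, Complex.ofReal_re] using h2
    · intro hC m hm a b
      simp only [keyT, keyL]
      refine tendsto_finset_sum _ fun x _ => tendsto_finset_sum _ fun y _ => ?_
      exact ((Complex.continuous_ofReal.tendsto _).comp (hC m hm x y)).const_mul _
end
end
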